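/- Let φ ∈ C¹((0,∞)) and set ψ(t) = t φ'(t). Suppose φ and ψ are bounded and continuous on (0,∞), and slowly oscillating at ∞ in the sense that for some λ ∈ (0,1), lim_{r→∞} sup_{t,τ∈[λr,r]}|φ(t)−φ(τ)| = 0 and lim_{r→∞} sup_{t,τ∈[λr,r]}|ψ(t)−ψ(τ)| = 0. Then lim_{t→∞} ψ(t) = 0. -/

import Mathlib

theorem stmt_17 (lam : ℝ) (hlam : lam ∈ Set.Ioo (0 : ℝ) 1)
    (φ φ' : ℝ → ℂ)
    (hd : ∀ t > 0, HasDerivAt φ (φ' t) t)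
    (hφb : ∃ C, ∀ t > 0, ‖φ t‖ ≤ C)
    (hψb : ∃ C, ∀ t : ℝ, 0 < t → ‖(t : ℂ) * φ' t‖ ≤ C)
    (hψc : ContinuousOn (fun t : ℝ => (t : ℂ) * φ' t) (Set.Ioi 0))
    (hφso : ∀ ε > 0, ∃ M : ℝ, ∀ r : ℝ, M < r →
        ∀ t ∈ Set.Icc (lam * r) r, ∀ τ ∈ Set.Icc (lam * r) r,
          ‖φ t - φ τ‖ < ε)
    (hψso : ∀ ε > 0, ∃ M : ℝ, ∀ r : ℝ, M < r →
        ∀ t ∈ Set.Icc (lam * r) r, ∀ τ ∈ Set.Icc (lam * r) r,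
          ‖(t : ℂ) * φ' t - (τ : ℂ) * φ' τ‖ < ε) :
    Filter.Tendsto (fun t : ℝ => (t : ℂ) * φ' t) Filter.atTop (nhds 0) := by
  obtain ⟨hl0, hl1⟩ := hlam
  set L : ℝ := -Real.log lam with hLdef
  have hL : 0 < L := by
    have := Real.log_neg hl0 hl1
    simp only [hLdef]; linarith
  rw [NormedAddCommGroup.tendsto_nhds_zero]
  intro ε hε
  rw [Filter.eventually_atTop]
  have h1lam : 0 < 1 - lam := by linarith
  set δ : ℝ := ε * L * lam / (2 * (1 - lam)) with hδdef
  have hδ : 0 < δ := by positivity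
  obtain ⟨M₁, hM₁⟩ := hψso δ hδ
  obtain ⟨M₂, hM₂⟩ := hφso (ε * L / 2) (by positivity)
  refine ⟨max (max M₁ M₂) 0 + 1, fun r hr => ?_⟩
  have hr0 : 0 < r := by
    have : (0:ℝ) ≤ max (max M₁ M₂) 0 := le_max_right _ _
    linarith
  have hrM₁ : M₁ < r := by
    have : M₁ ≤ max (max M₁ M₂) 0 := le_trans (le_max_left _ _) (le_max_left _ _)
    linarith
  have hrM₂ : M₂ < r := by
    have : M₂ ≤ max (max M₁ M₂) 0 := le_trans (le_max_right _ _) (le_max_left _ _)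
    linarith
  have hlr0 : 0 < lam * r := by positivity
  have hle : lam * r ≤ r := by nlinarith
  have hIcc : Set.Icc (lam * r) r ⊆ Set.Ioi (0:ℝ) := fun t ht => lt_of_lt_of_le hlr0 ht.1
  have hrmem : r ∈ Set.Icc (lam * r) r := ⟨hle, le_refl r⟩
  set ψr : ℂ := (r : ℂ) * φ' r with hψrdef
  -- continuity of φ' on the interval
  have hφ'cont : ContinuousOn φ' (Set.Icc (lam * r) r) := by
    have h1 : ContinuousOn (fun t : ℝ => ((t : ℂ))⁻¹ * ((t : ℂ) * φ' t)) (Set.Icc (lam * r) r) := by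
      refine ContinuousOn.mul (ContinuousOn.inv₀ (Complex.continuous_ofReal.continuousOn) ?_)
        (hψc.mono hIcc)
      intro t ht
      exact_mod_cast ne_of_gt (lt_of_lt_of_le hlr0 ht.1)
    refine h1.congr fun t ht => ?_
    have htne : (t : ℂ) ≠ 0 := by exact_mod_cast ne_of_gt (lt_of_lt_of_le hlr0 ht.1)
    field_simp
  have hint1 : IntervalIntegrable φ' MeasureTheory.volume (lam * r) r := by
    apply ContinuousOn.intervalIntegrable
    rwa [Set.uIcc_of_le hle]
  have hint2 : IntervalIntegrable (fun t : ℝ => ψr * ((t : ℂ))⁻¹) MeasureTheory.volume (lam * r) r := by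
    apply ContinuousOn.intervalIntegrable
    rw [Set.uIcc_of_le hle]
    refine ContinuousOn.mul continuousOn_const
      (ContinuousOn.inv₀ (Complex.continuous_ofReal.continuousOn) ?_)
    intro t ht
    exact_mod_cast ne_of_gt (lt_of_lt_of_le hlr0 ht.1)
  -- FTC
  have hFTC : ∫ t in (lam * r)..r, φ' t = φ r - φ (lam * r) := by
    refine intervalIntegral.integral_eq_sub_of_hasDerivAt (fun t ht => ?_) hint1
    rw [Set.uIcc_of_le hle] at ht
    exact hd t (lt_of_lt_of_le hlr0 ht.1)
  -- integral of 1/t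
  have hinv : ∫ t in (lam * r)..r, ((t : ℂ))⁻¹ = (L : ℂ) := by
    have h0 : (0:ℝ) ∉ Set.uIcc (lam * r) r := by
      rw [Set.uIcc_of_le hle]
      intro h; exact absurd h.1 (not_le.mpr hlr0)
    have : ∫ t in (lam * r)..r, (t:ℝ)⁻¹ = Real.log (r / (lam * r)) := integral_inv h0
    have hlog : Real.log (r / (lam * r)) = L := by
      have hq : r / (lam * r) = lam⁻¹ := by field_simp
      rw [hq, Real.log_inv]
    calc ∫ t in (lam * r)..r, ((t : ℂ))⁻¹
        = ∫ t in (lam * r)..r, (((t:ℝ)⁻¹ : ℝ) : ℂ) := by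
          apply intervalIntegral.integral_congr; intro t _; simp
      _ = ((∫ t in (lam * r)..r, (t:ℝ)⁻¹ : ℝ) : ℂ) := intervalIntegral.integral_ofReal
      _ = (L : ℂ) := by rw [this, hlog]
  have hmain : ∫ t in (lam * r)..r, (ψr * ((t : ℂ))⁻¹ - φ' t)
      = ψr * (L : ℂ) - (φ r - φ (lam * r)) := by
    rw [intervalIntegral.integral_sub hint2 hint1, hFTC,
      intervalIntegral.integral_const_mul, hinv]
  -- bound on the integrand
  have hbound : ‖∫ t in (lam * r)..r, (ψr * ((t : ℂ))⁻¹ - φ' t)‖ ≤ δ / (lam * r) * |r - lam * r| := by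
    apply intervalIntegral.norm_integral_le_of_norm_le_const
    intro x hx
    rw [Set.uIoc_of_le hle] at hx
    have hxIcc : x ∈ Set.Icc (lam * r) r := ⟨le_of_lt hx.1, hx.2⟩
    have hx0 : 0 < x := lt_of_lt_of_le hlr0 hxIcc.1
    have hxne : (x : ℂ) ≠ 0 := by exact_mod_cast ne_of_gt hx0
    have heq : ψr * ((x : ℂ))⁻¹ - φ' x = (ψr - (x:ℂ) * φ' x) * ((x : ℂ))⁻¹ := by
      field_simp
    rw [heq, norm_mul, norm_inv]
    have h1 : ‖ψr - (x:ℂ) * φ' x‖ ≤ δ := le_of_lt (hM₁ r hrM₁ r hrmem x hxIcc)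
    have h2 : ‖((x:ℝ) : ℂ)‖ = x := by
      rw [Complex.norm_real, Real.norm_eq_abs, abs_of_pos hx0]
    rw [h2]
    rw [div_eq_mul_inv]
    have h3 : (x:ℝ)⁻¹ ≤ (lam * r)⁻¹ := inv_anti₀ hlr0 hxIcc.1
    exact mul_le_mul h1 h3 (by positivity) (le_of_lt hδ)
  have habs : |r - lam * r| = r - lam * r := abs_of_nonneg (by linarith)
  have hc : δ / (lam * r) * |r - lam * r| = ε * L / 2 := by
    rw [habs, hδdef]
    field_simp
  -- conclude
  have hφbound : ‖φ r - φ (lam * r)‖ < ε * L / 2 :=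
    hM₂ r hrM₂ r hrmem (lam * r) ⟨le_refl _, hle⟩
  have hfin : ‖ψr * (L : ℂ)‖ < ε * L := by
    have : ψr * (L : ℂ) = (∫ t in (lam * r)..r, (ψr * ((t : ℂ))⁻¹ - φ' t)) + (φ r - φ (lam * r)) := by
      rw [hmain]; ring
    rw [this]
    calc ‖(∫ t in (lam * r)..r, (ψr * ((t : ℂ))⁻¹ - φ' t)) + (φ r - φ (lam * r))‖
        ≤ ‖∫ t in (lam * r)..r, (ψr * ((t : ℂ))⁻¹ - φ' t)‖ + ‖φ r - φ (lam * r)‖ := norm_add_le _ _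
      _ < ε * L / 2 + ε * L / 2 := by
          apply add_lt_add_of_le_of_lt _ hφbound
          rw [← hc]; exact hbound
      _ = ε * L := by ring
  have hnorm : ‖ψr * (L : ℂ)‖ = ‖ψr‖ * L := by
    rw [norm_mul, Complex.norm_real, Real.norm_eq_abs, abs_of_pos hL]
  rw [hnorm] at hfin
  have := lt_of_mul_lt_mul_right hfin hL.le
  exact this
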